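/- A finite-dimensional G-graded K-algebra A is graded symmetric (i.e., A* ≅ A as graded A-bimodules) if and only if there exists a family of scalars α = (α_ℓ)_{ℓ∈J_ε} such that the ε-paratrophic matrix P(ε,α) is both symmetric and invertible. -/

import Mathlib

open Finset

/-- **Proposition B'.**  A finite-dimensional `G`-graded algebra `A` is graded symmetric
(`A* ≅ A` as graded `A`-bimodules, unfolded: there is a `K`-linear equivalence
`φ : A ≃ A*` with `φ(a·x)(y) = φ(x)(y·a)`, `φ(x·a)(y) = φ(x)(a·y)`, mapping `𝒜 g` into
`(A*)_g`) if and only if there is a family of scalars `α` indexed by `J_ε` such that the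
ε-paratrophic matrix `P(ε,α)` is symmetric and invertible. -/
theorem stmt5 (K : Type) [Field K] (G : Type) [Group G] [DecidableEq G]
    (A : Type) [Ring A] [Algebra K A] (𝒜 : G → Submodule K A)
    (h_one : (1 : A) ∈ 𝒜 1)
    (h_mul : ∀ {g h : G} {a b : A}, a ∈ 𝒜 g → b ∈ 𝒜 h → a * b ∈ 𝒜 (g * h))
    (J : Type) [Fintype J] [DecidableEq J]
    (deg : J → G) (e : Module.Basis J K A)
    (h𝒜 : ∀ g : G, 𝒜 g = Submodule.span K (e '' {i | deg i = g}))
    (c : J → J → J → K) (hc : ∀ i j ℓ, c i j ℓ = e.repr (e i * e j) ℓ) :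
    (∃ φ : A ≃ₗ[K] Module.Dual K A,
        (∀ a x y : A, φ (a * x) y = φ x (y * a)) ∧
        (∀ a x y : A, φ (x * a) y = φ x (a * y)) ∧
        (∀ g : G, ∀ x ∈ 𝒜 g, ∀ h : G, h ≠ g⁻¹ → ∀ y ∈ 𝒜 h, φ x y = 0)) ↔
    (∃ α : J → K,
        (Matrix.of fun i j : J =>
            ∑ ℓ ∈ univ.filter (fun ℓ => deg ℓ = (1 : G)), α ℓ * c i j ℓ).IsSymm ∧
        IsUnit (Matrix.of fun i j : J =>
            ∑ ℓ ∈ univ.filter (fun ℓ => deg ℓ = (1 : G)), α ℓ * c i j ℓ)) := by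

  classical
  constructor
  · rintro ⟨φ, h1, h2, h3⟩
    set l : Module.Dual K A := φ 1 with hl
    have hφ1 : ∀ a y : A, φ a y = l (y * a) := by
      intro a y
      have := h1 a 1 y
      simpa using this
    have hφ2 : ∀ a y : A, φ a y = l (a * y) := by
      intro a y
      have := h2 a 1 y
      simpa using this
    have lcomm : ∀ a y : A, l (y * a) = l (a * y) := by
      intro a y; rw [← hφ1, hφ2]
    have hl0 : ∀ g : G, g ≠ 1 → ∀ y ∈ 𝒜 g, l y = 0 := by
      intro g hg y hy
      have := h3 1 1 h_one g (by simpa using hg) y hy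
      simpa [hl] using this
    have hle : ∀ i : J, deg i ≠ 1 → l (e i) = 0 := by
      intro i hi
      refine hl0 (deg i) hi (e i) ?_
      rw [h𝒜]
      exact Submodule.subset_span ⟨i, rfl, rfl⟩
    have key : ∀ i j : J,
        (∑ ℓ ∈ univ.filter (fun ℓ => deg ℓ = (1 : G)), l (e ℓ) * c i j ℓ)
          = l (e i * e j) := by
      intro i j
      conv_rhs => rw [← e.sum_repr (e i * e j)]
      rw [map_sum, Finset.sum_filter]
      refine Finset.sum_congr rfl fun ℓ _ => ?_
      by_cases hdeg : deg ℓ = 1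
      · simp [hdeg, hc, mul_comm]
      · simp [hdeg, hle ℓ hdeg]
    refine ⟨fun ℓ => l (e ℓ), ?_, ?_⟩
    · show Matrix.IsSymm _
      rw [Matrix.IsSymm]
      ext i j
      simp only [Matrix.transpose_apply, Matrix.of_apply]
      rw [key, key, lcomm]
    · have hM : (Matrix.of fun i j : J =>
          ∑ ℓ ∈ univ.filter (fun ℓ => deg ℓ = (1 : G)), l (e ℓ) * c i j ℓ)
          = LinearMap.toMatrix e e.dualBasis φ.toLinearMap := by
        ext i j
        rw [LinearMap.toMatrix_apply, Module.Basis.dualBasis_repr]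
        simp only [Matrix.of_apply]
        rw [key]
        simp only [LinearEquiv.coe_coe]
        exact (hφ1 (e j) (e i)).symm
      rw [hM]
      set M := LinearMap.toMatrix e e.dualBasis φ.toLinearMap
      set N := LinearMap.toMatrix e.dualBasis e φ.symm.toLinearMap
      have hMN : M * N = 1 := by
        rw [← LinearMap.toMatrix_comp e.dualBasis e e.dualBasis]
        have : φ.toLinearMap ∘ₗ φ.symm.toLinearMap = LinearMap.id := by
          ext x; simp
        rw [this, LinearMap.toMatrix_id]
      have hNM : N * M = 1 := by
        rw [← LinearMap.toMatrix_comp e e.dualBasis e]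
        have : φ.symm.toLinearMap ∘ₗ φ.toLinearMap = LinearMap.id := by
          ext x; simp
        rw [this, LinearMap.toMatrix_id]
      exact ⟨⟨M, N, hMN, hNM⟩, rfl⟩
  · rintro ⟨α, hsym, hunit⟩
    set P : Matrix J J K := Matrix.of fun i j : J =>
        ∑ ℓ ∈ univ.filter (fun ℓ => deg ℓ = (1 : G)), α ℓ * c i j ℓ with hPdef
    set l : Module.Dual K A :=
      ∑ ℓ ∈ univ.filter (fun ℓ => deg ℓ = (1 : G)), α ℓ • e.coord ℓ with hldef
    have hlapp : ∀ x : A,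
        l x = ∑ ℓ ∈ univ.filter (fun ℓ => deg ℓ = (1 : G)), α ℓ * e.repr x ℓ := by
      intro x
      simp [hldef, Module.Basis.coord_apply]
    have hle : ∀ i : J, deg i ≠ 1 → l (e i) = 0 := by
      intro i hi
      rw [hlapp]
      refine Finset.sum_eq_zero fun ℓ hℓ => ?_
      rw [Finset.mem_filter] at hℓ
      have : ℓ ≠ i := fun h => hi (h ▸ hℓ.2)
      simp [Module.Basis.repr_self, Finsupp.single_apply, Ne.symm this]
    have hP : ∀ i j : J, l (e i * e j) = P i j := by
      intro i j
      rw [hlapp]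
      simp only [hPdef, Matrix.of_apply]
      exact Finset.sum_congr rfl fun ℓ _ => by rw [hc]
    have hl0 : ∀ g : G, g ≠ 1 → ∀ x ∈ 𝒜 g, l x = 0 := by
      intro g hg x hx
      rw [h𝒜] at hx
      have hsub : Submodule.span K (⇑e '' {i | deg i = g}) ≤ LinearMap.ker l := by
        rw [Submodule.span_le]
        rintro _ ⟨i, hi, rfl⟩
        exact hle i (fun h => hg (h ▸ hi.symm ▸ rfl))
      exact hsub hx
    set B : A →ₗ[K] A →ₗ[K] K := (LinearMap.mul K A).compr₂ l with hBdef
    have hBapp : ∀ x y : A, B x y = l (x * y) := fun x y => rfl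
    have hBflip : B = B.flip := by
      apply Module.Basis.ext e
      intro i
      apply Module.Basis.ext e
      intro j
      simp only [LinearMap.flip_apply, hBapp]
      rw [hP, hP]
      have := congrFun (congrFun hsym j) i
      simpa [Matrix.transpose_apply] using this
    have lcomm : ∀ x y : A, l (x * y) = l (y * x) := by
      intro x y
      have h1 : B x y = B.flip x y := by rw [← hBflip]
      simpa [LinearMap.flip_apply, hBapp] using h1
    set φ₀ : A →ₗ[K] Module.Dual K A := B.flip with hφ₀def
    have hφ₀app : ∀ x y : A, φ₀ x y = l (y * x) := fun x y => rfl
    have hMP : LinearMap.toMatrix e e.dualBasis φ₀ = P := by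
      ext i j
      rw [LinearMap.toMatrix_apply, Module.Basis.dualBasis_repr, hφ₀app, ← hP]
    obtain ⟨u, hu⟩ := hunit
    set ψ : Module.Dual K A →ₗ[K] A := Matrix.toLin e.dualBasis e (↑u⁻¹) with hψdef
    have hψM : LinearMap.toMatrix e.dualBasis e ψ = (↑u⁻¹ : Matrix J J K) := by
      rw [hψdef, LinearMap.toMatrix_toLin]
    have hcomp1 : φ₀ ∘ₗ ψ = LinearMap.id := by
      apply (LinearMap.toMatrix e.dualBasis e.dualBasis).injective
      rw [LinearMap.toMatrix_comp e.dualBasis e e.dualBasis, hMP, hψM,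
        LinearMap.toMatrix_id, ← hu, u.mul_inv]
    have hcomp2 : ψ ∘ₗ φ₀ = LinearMap.id := by
      apply (LinearMap.toMatrix e e).injective
      rw [LinearMap.toMatrix_comp e e.dualBasis e, hMP, hψM,
        LinearMap.toMatrix_id, ← hu, u.inv_mul]
    refine ⟨LinearEquiv.ofLinear φ₀ ψ hcomp1 hcomp2, ?_, ?_, ?_⟩
    · intro a x y
      simp only [LinearEquiv.ofLinear_apply, hφ₀app]
      rw [mul_assoc]
    · intro a x y
      simp only [LinearEquiv.ofLinear_apply, hφ₀app]
      rw [← mul_assoc, lcomm (y * x) a, ← mul_assoc]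
    · intro g x hx h hne y hy
      simp only [LinearEquiv.ofLinear_apply, hφ₀app]
      refine hl0 (h * g) ?_ (y * x) (h_mul hy hx)
      intro hcontra
      exact hne (eq_inv_of_mul_eq_one_left hcontra)
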